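/- Given a program P = ⟨Σ, C, R⟩ where C is strongly regular and well-typed, the term model M_P(V) is a PT-algebra. Moreover, if all rules in R are regular and well-typed, then M_P(V) is a well-typed PT-algebra. -/

import Mathlib

namespace ACRWL

/-- Partial expressions: data variables, bottom, data constructor applications
and defined function applications (symbols named by natural numbers). -/
inductive Expr : Type where
  | var : ℕ → Expr
  | bot : Expr
  | con : ℕ → List Expr → Expr
  | fn  : ℕ → List Expr → Expr

namespace Expr

/-- Occurrence of a data variable in an expression. -/
inductive Occurs (x : ℕ) : Expr → Prop where
  | var : Occurs x (var x)
  | con {c : ℕ} {es : List Expr} {e : Expr} : e ∈ es → Occurs x e → Occurs x (con c es)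
  | fn {f : ℕ} {es : List Expr} {e : Expr} : e ∈ es → Occurs x e → Occurs x (fn f es)

/-- Partial data terms: built from variables, ⊥ and data constructors only. -/
inductive IsTerm : Expr → Prop where
  | var (x : ℕ) : IsTerm (var x)
  | bot : IsTerm bot
  | con {c : ℕ} {es : List Expr} : (∀ e ∈ es, IsTerm e) → IsTerm (con c es)

/-- Total expressions: no occurrence of ⊥. -/
inductive NoBot : Expr → Prop where
  | var (x : ℕ) : NoBot (var x)
  | con {c : ℕ} {es : List Expr} : (∀ e ∈ es, NoBot e) → NoBot (con c es)
  | fn {f : ℕ} {es : List Expr} : (∀ e ∈ es, NoBot e) → NoBot (fn f es)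

/-- Total data terms. -/
def IsTotalTerm (e : Expr) : Prop := IsTerm e ∧ NoBot e

/-- Application of a data substitution. -/
def subst (σ : ℕ → Expr) : Expr → Expr
  | var x => σ x
  | bot => bot
  | con c es => con c (es.attach.map fun e => subst σ e.1)
  | fn f es => fn f (es.attach.map fun e => subst σ e.1)
termination_by e => sizeOf e
decreasing_by
  all_goals (simp only [Expr.con.sizeOf_spec, Expr.fn.sizeOf_spec]; have := List.sizeOf_lt_of_mem e.2; omega)

/-- Number of occurrences of the variable `x`. -/
def varCount (x : ℕ) : Expr → ℕ
  | var y => if y = x then 1 else 0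
  | bot => 0
  | con _ es => (es.attach.map fun e => varCount x e.1).sum
  | fn _ es => (es.attach.map fun e => varCount x e.1).sum
termination_by e => sizeOf e
decreasing_by
  all_goals (simp only [Expr.con.sizeOf_spec, Expr.fn.sizeOf_spec]; have := List.sizeOf_lt_of_mem e.2; omega)

end Expr

/-- A set of equational axioms between (total data) terms. -/
abbrev Axioms := Set (Expr × Expr)

/-- A data substitution mapping every variable to a partial data term. -/
def TermSub (σ : ℕ → Expr) : Prop := ∀ x, (σ x).IsTerm

/-- `σ` is safe for `t`: variables occurring more than once in `t`
are mapped to total data terms. -/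
def SafeSub (σ : ℕ → Expr) (t : Expr) : Prop :=
  ∀ x, 2 ≤ Expr.varCount x t → Expr.IsTotalTerm (σ x)

/-- Well-formed set of equational axioms: a finite set of equations between
total data terms. -/
def WfAxioms (C : Axioms) : Prop :=
  C.Finite ∧ ∀ p ∈ C, Expr.IsTotalTerm p.1 ∧ Expr.IsTotalTerm p.2

/-- `[C]_⊒` : the instances of the axioms of `C`, read in both directions,
under safe partial data substitutions. -/
def CInstances (C : Axioms) : Set (Expr × Expr) :=
  { q | ∃ p ∈ C, ∃ σ : ℕ → Expr, TermSub σ ∧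
      ((SafeSub σ p.1 ∧ q = (p.1.subst σ, p.2.subst σ)) ∨
       (SafeSub σ p.2 ∧ q = (p.2.subst σ, p.1.subst σ))) }

/-- Every axiom is regular : both sides have the same data variables. -/
def RegularAxioms (C : Axioms) : Prop :=
  ∀ p ∈ C, ∀ x, Expr.Occurs x p.1 ↔ Expr.Occurs x p.2

/-- Every axiom is non-collapsing : neither side is a variable. -/
def NonCollapsing (C : Axioms) : Prop :=
  ∀ p ∈ C, (∀ x, p.1 ≠ Expr.var x) ∧ (∀ x, p.2 ≠ Expr.var x)

/-- Strongly regular set of axioms. -/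
def StronglyRegular (C : Axioms) : Prop := RegularAxioms C ∧ NonCollapsing C

/-- The inequational calculus associated to `C`, deriving approximation
inequalities `s ⊒ t` between partial data terms. -/
inductive Geq (C : Axioms) : Expr → Expr → Prop where
  | bot {t : Expr} : t.IsTerm → Geq C t Expr.bot
  | refl {t : Expr} : t.IsTerm → Geq C t t
  | trans {t t' t'' : Expr} : Geq C t t' → Geq C t' t'' → Geq C t t''
  | mono {c : ℕ} {ts ss : List Expr} : ts.length = ss.length →
      (∀ p ∈ ts.zip ss, Geq C p.1 p.2) → Geq C (Expr.con c ts) (Expr.con c ss)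
  | ax {s t : Expr} : (s, t) ∈ CInstances C → Geq C s t

/-- `s ≈_C t` iff `s ⊒_C t` and `t ⊒_C s`. -/
def EqC (C : Axioms) (s t : Expr) : Prop := Geq C s t ∧ Geq C t s

end ACRWL

namespace ACRWL

/-- A defining rule `f(t₁,…,tₙ) → r ⇐ a₁ == b₁, …, a_m == b_m`. -/
structure Rule : Type where
  fname : ℕ
  lhs : List Expr
  rhs : Expr
  conds : List (Expr × Expr)

/-- Application of a data substitution to a defining rule. -/
def Rule.subst (σ : ℕ → Expr) (ρ : Rule) : Rule :=
  ⟨ρ.fname, ρ.lhs.map (Expr.subst σ), ρ.rhs.subst σ,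
    ρ.conds.map fun p => (p.1.subst σ, p.2.subst σ)⟩

/-- A linear tuple of terms: no variable occurs more than once in the tuple. -/
def Linear (ts : List Expr) : Prop := ∀ x : ℕ, (ts.map (Expr.varCount x)).sum ≤ 1

/-- Well-formed defining rule: linear left-hand side made of total data
terms; total right-hand side and conditions. -/
def WfRule (ρ : Rule) : Prop :=
  Linear ρ.lhs ∧ (∀ t ∈ ρ.lhs, Expr.IsTotalTerm t) ∧ ρ.rhs.NoBot ∧
  ∀ p ∈ ρ.conds, p.1.NoBot ∧ p.2.NoBot

/-- A program: a finite set of equational axioms for constructors together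
with a finite set of defining rules for functions. -/
structure Program : Type where
  C : Axioms
  R : Set Rule
  wfC : WfAxioms C
  finR : R.Finite
  wfR : ∀ ρ ∈ R, WfRule ρ

/-- `[R]_→` : all instances of rules of the program under
partial data substitutions. -/
def RInstances (P : Program) : Set Rule :=
  { ρ' | ∃ ρ ∈ P.R, ∃ σ : ℕ → Expr, TermSub σ ∧ ρ' = ρ.subst σ }

/-- Statements derived by the rewriting calculi: reduction/approximation
statements `e → e'` and joinability statements `e == e'`. -/
inductive Stm : Type where
  | red : Expr → Expr → Stm
  | join : Expr → Expr → Stm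

/-- The Basic Rewriting Calculus (BRC) of a program. -/
inductive BRC (P : Program) : Stm → Prop where
  | bot (e : Expr) : BRC P (Stm.red e Expr.bot)
  | refl (e : Expr) : BRC P (Stm.red e e)
  | trans {e e' e'' : Expr} :
      BRC P (Stm.red e e') → BRC P (Stm.red e' e'') → BRC P (Stm.red e e'')
  | monoCon {c : ℕ} {es es' : List Expr} : es.length = es'.length →
      (∀ p ∈ es.zip es', BRC P (Stm.red p.1 p.2)) →
      BRC P (Stm.red (Expr.con c es) (Expr.con c es'))
  | monoFn {f : ℕ} {es es' : List Expr} : es.length = es'.length →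
      (∀ p ∈ es.zip es', BRC P (Stm.red p.1 p.2)) →
      BRC P (Stm.red (Expr.fn f es) (Expr.fn f es'))
  | rule {ρ : Rule} : ρ ∈ RInstances P →
      (∀ p ∈ ρ.conds, BRC P (Stm.join p.1 p.2)) →
      BRC P (Stm.red (Expr.fn ρ.fname ρ.lhs) ρ.rhs)
  | mut {s t : Expr} : (s, t) ∈ CInstances P.C → BRC P (Stm.red s t)
  | join {e e' t : Expr} : t.IsTotalTerm →
      BRC P (Stm.red e t) → BRC P (Stm.red e' t) → BRC P (Stm.join e e')

/-- The Goal-Oriented Rewriting Calculus (GORC) of a program. -/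
inductive GORC (P : Program) : Stm → Prop where
  | bot (e : Expr) : GORC P (Stm.red e Expr.bot)
  | rrefl (x : ℕ) : GORC P (Stm.red (Expr.var x) (Expr.var x))
  | dc {c : ℕ} {es ts : List Expr} : es.length = ts.length →
      (∀ p ∈ es.zip ts, GORC P (Stm.red p.1 p.2)) →
      GORC P (Stm.red (Expr.con c es) (Expr.con c ts))
  | omut {c : ℕ} {es ts : List Expr} {s t : Expr} : t ≠ Expr.bot →
      (Expr.con c ts, s) ∈ CInstances P.C → es.length = ts.length →
      (∀ p ∈ es.zip ts, GORC P (Stm.red p.1 p.2)) →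
      GORC P (Stm.red s t) → GORC P (Stm.red (Expr.con c es) t)
  | orule {es : List Expr} {ρ : Rule} {t : Expr} : t ≠ Expr.bot →
      ρ ∈ RInstances P → es.length = ρ.lhs.length →
      (∀ p ∈ es.zip ρ.lhs, GORC P (Stm.red p.1 p.2)) →
      (∀ p ∈ ρ.conds, GORC P (Stm.join p.1 p.2)) →
      GORC P (Stm.red ρ.rhs t) → GORC P (Stm.red (Expr.fn ρ.fname es) t)
  | join {e e' t : Expr} : t.IsTotalTerm →
      GORC P (Stm.red e t) → GORC P (Stm.red e' t) → GORC P (Stm.join e e')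

end ACRWL

namespace ACRWL

/-- Polymorphic types built from type variables and type constructors. -/
inductive Ty : Type where
  | tvar : ℕ → Ty
  | tcon : ℕ → List Ty → Ty

namespace Ty

/-- Occurrence of a type variable in a type. -/
inductive OccursT (α : ℕ) : Ty → Prop where
  | tvar : OccursT α (tvar α)
  | tcon {K : ℕ} {τs : List Ty} {τ : Ty} : τ ∈ τs → OccursT α τ → OccursT α (tcon K τs)

/-- Application of a type substitution. -/
def subst (σ : ℕ → Ty) : Ty → Ty
  | tvar α => σ α
  | tcon K τs => tcon K (τs.attach.map fun τ => subst σ τ.1)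
termination_by τ => sizeOf τ
decreasing_by
  all_goals (simp only [Ty.tcon.sizeOf_spec]; have := List.sizeOf_lt_of_mem τ.2; omega)

end Ty

/-- A principal type declaration `(τ₁,…,τₙ) → τ`. -/
structure Decl : Type where
  args : List Ty
  res : Ty

/-- Transparency: every type variable of the argument types occurs in the
result type. -/
def Decl.Transparent (d : Decl) : Prop :=
  ∀ α : ℕ, (∃ τ ∈ d.args, Ty.OccursT α τ) → Ty.OccursT α d.res

/-- Instance of a declaration under a type substitution. -/
def Decl.substT (σt : ℕ → Ty) (d : Decl) : Decl :=
  ⟨d.args.map (Ty.subst σt), d.res.subst σt⟩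

/-- A variant of a declaration: a renaming of its type variables. -/
def IsVariant (d d' : Decl) : Prop :=
  ∃ ρ : ℕ → ℕ, Function.Injective ρ ∧ d' = d.substT (fun α => Ty.tvar (ρ α))

/-- A polymorphic signature: (optional) principal type declarations for data
constructors and for defined function symbols, the former transparent. -/
structure Signature : Type where
  dc : ℕ → Option Decl
  fs : ℕ → Option Decl
  dc_trans : ∀ c d, dc c = some d → Decl.Transparent d

/-- An environment: at most one type annotation per data variable. -/
abbrev Env := ℕ → Option Ty

/-- Instance of an environment under a type substitution. -/
def Env.substT (V : Env) (σt : ℕ → Ty) : Env := fun x => (V x).map (Ty.subst σt)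

/-- The type inference system: `HasType Sg V e τ` is the judgement
`V ⊢_{Σ⊥} e : τ`.  The symbol `⊥` has principal type `⊥ : → α`, hence
every type is an admissible instance for it. -/
inductive HasType (Sg : Signature) (V : Env) : Expr → Ty → Prop where
  | var {x : ℕ} {τ : Ty} : V x = some τ → HasType Sg V (Expr.var x) τ
  | bot (τ : Ty) : HasType Sg V Expr.bot τ
  | con {c : ℕ} {es : List Expr} {d : Decl} {σt : ℕ → Ty} :
      Sg.dc c = some d → es.length = d.args.length →
      (∀ p ∈ es.zip d.args, HasType Sg V p.1 (Ty.subst σt p.2)) →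
      HasType Sg V (Expr.con c es) (Ty.subst σt d.res)
  | fn {f : ℕ} {es : List Expr} {d : Decl} {σt : ℕ → Ty} :
      Sg.fs f = some d → es.length = d.args.length →
      (∀ p ∈ es.zip d.args, HasType Sg V p.1 (Ty.subst σt p.2)) →
      HasType Sg V (Expr.fn f es) (Ty.subst σt d.res)

/-- Occurrence of a function symbol in an expression. -/
inductive FnOccurs (f : ℕ) : Expr → Prop where
  | head {es : List Expr} : FnOccurs f (Expr.fn f es)
  | con {c : ℕ} {es : List Expr} {e : Expr} : e ∈ es → FnOccurs f e → FnOccurs f (Expr.con c es)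
  | fn {g : ℕ} {es : List Expr} {e : Expr} : e ∈ es → FnOccurs f e → FnOccurs f (Expr.fn g es)

end ACRWL

namespace ACRWL

/-- A regular defining rule: every variable of the right-hand side occurs in
the left-hand side. -/
def RegularRule (ρ : Rule) : Prop :=
  ∀ x : ℕ, Expr.Occurs x ρ.rhs → ∃ t ∈ ρ.lhs, Expr.Occurs x t

/-- A well-typed (regular) defining rule for `f : (τ₁,…,τₙ) → τ`: in some
environment the left-hand side arguments have the declared argument types,
the right-hand side has the declared result type, and the two sides of every
condition share a type. -/
def WellTypedRule (Sg : Signature) (ρ : Rule) : Prop :=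
  ∃ d : Decl, Sg.fs ρ.fname = some d ∧ ρ.lhs.length = d.args.length ∧
    ∃ V : Env,
      (∀ p ∈ ρ.lhs.zip d.args, HasType Sg V p.1 p.2) ∧
      HasType Sg V ρ.rhs d.res ∧
      ∀ p ∈ ρ.conds, ∃ τ : Ty, HasType Sg V p.1 τ ∧ HasType Sg V p.2 τ

/-- A well-typed strongly regular equational axiom
`c(t₁,…,tₙ) ≈ d(s₁,…,s_m)`: the principal types of `c` and `d` admit
variants with a common result type `τ` such that both sides have type `τ`
in some environment. -/
def WellTypedAxiom (Sg : Signature) (p : Expr × Expr) : Prop :=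
  ∃ (c : ℕ) (ts : List Expr) (d : ℕ) (ss : List Expr)
      (τs τs' : List Ty) (τ : Ty),
    p.1 = Expr.con c ts ∧ p.2 = Expr.con d ss ∧
    (∃ D, Sg.dc c = some D ∧ IsVariant D ⟨τs, τ⟩) ∧
    (∃ D, Sg.dc d = some D ∧ IsVariant D ⟨τs', τ⟩) ∧
    ∃ V : Env, HasType Sg V p.1 τ ∧ HasType Sg V p.2 τ

/-- A well-typed strongly regular program. -/
def WellTypedProgram (Sg : Signature) (P : Program) : Prop :=
  StronglyRegular P.C ∧
  (∀ p ∈ P.C, WellTypedAxiom Sg p) ∧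
  (∀ ρ ∈ P.R, RegularRule ρ ∧ WellTypedRule Sg ρ)

end ACRWL

namespace ACRWL

/-- Expression whose data variables all belong to the environment `V`
(i.e. to the set `X` of variables of `V`). -/
def ExprOver (V : Env) (e : Expr) : Prop := ∀ x, Expr.Occurs x e → (V x).isSome

/-- Partial data term over the variables of `V`: an element (representative)
of the data universe of the term model `M_P(V)`. -/
def TermOver (V : Env) (t : Expr) : Prop := t.IsTerm ∧ ExprOver V t

/-- `[t]` is a maximal (totally defined) element of the data universe of the
term model. -/
def MaxClass (P : Program) (V : Env) (t : Expr) : Prop :=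
  ∀ s, TermOver V s → Geq P.C s t → Geq P.C t s

/-- Denotation in the term model `M_P(V)` under the data valuation
represented by the substitution `σd`:  `MDen P σd e t` means
`[t] ∈ ⟦e⟧^{M_P(V)}[σd]`. -/
inductive MDen (P : Program) (σd : ℕ → Expr) : Expr → Expr → Prop where
  | bot {t : Expr} : EqC P.C t Expr.bot → MDen P σd Expr.bot t
  | var {x : ℕ} {t : Expr} : Geq P.C (σd x) t → MDen P σd (Expr.var x) t
  | con {c : ℕ} {es ts : List Expr} {t : Expr} : es.length = ts.length →
      (∀ p ∈ es.zip ts, MDen P σd p.1 p.2) →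
      Geq P.C (Expr.con c ts) t → MDen P σd (Expr.con c es) t
  | fn {f : ℕ} {es ts : List Expr} {t t' : Expr} : es.length = ts.length →
      (∀ p ∈ es.zip ts, MDen P σd p.1 p.2) →
      GORC P (Stm.red (Expr.fn f ts) t') → EqC P.C t t' →
      MDen P σd (Expr.fn f es) t

/-- The term model satisfies `a == b` under the valuation `[σd]`. -/
def MJoinSat (P : Program) (V : Env) (σd : ℕ → Expr) (a b : Expr) : Prop :=
  ∃ s, TermOver V s ∧ MaxClass P V s ∧ MDen P σd a s ∧ MDen P σd b s

/-- The term model satisfies `e → e'` under the valuation `[σd]`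
(denotation inclusion). -/
def MRedSat (P : Program) (σd : ℕ → Expr) (e e' : Expr) : Prop :=
  ∀ s, MDen P σd e' s → MDen P σd e s

/-- The valuation `[σd]` over the term model is safe for `t`. -/
def MSafeVal (P : Program) (V : Env) (σd : ℕ → Expr) (t : Expr) : Prop :=
  ∀ x, 2 ≤ Expr.varCount x t → MaxClass P V (σd x)

/-- A substitution representing a data valuation over the term model. -/
def MValuation (V : Env) (σd : ℕ → Expr) : Prop :=
  TermSub σd ∧ ∀ x, TermOver V (σd x)

/-- The term model satisfies a defining rule. -/
def MSatRule (P : Program) (V : Env) (ρ : Rule) : Prop :=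
  ∀ σd, MValuation V σd → (∀ p ∈ ρ.conds, MJoinSat P V σd p.1 p.2) →
    MRedSat P σd (Expr.fn ρ.fname ρ.lhs) ρ.rhs

/-- The term model satisfies an equational axiom. -/
def MSatAxiom (P : Program) (V : Env) (p : Expr × Expr) : Prop :=
  ∀ σd, MValuation V σd →
    (MSafeVal P V σd p.1 → MRedSat P σd p.1 p.2) ∧
    (MSafeVal P V σd p.2 → MRedSat P σd p.2 p.1)

/-- The term model `M_P(V)` is a model of `P`. -/
def MModels (P : Program) (V : Env) : Prop :=
  (∀ ρ ∈ P.R, MSatRule P V ρ) ∧ (∀ p ∈ P.C, MSatAxiom P V p)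

end ACRWL

namespace ACRWL

namespace Ty
theorem subst_tvar (σ : ℕ → Ty) (a : ℕ) : subst σ (tvar a) = σ a := by rw [subst]
theorem subst_tcon (σ : ℕ → Ty) (K : ℕ) (ts : List Ty) :
    subst σ (tcon K ts) = tcon K (ts.map (subst σ)) := by
  rw [subst]; simp [List.attach_map_val]

theorem my_ind (motive : Ty → Prop) (h1 : ∀ a, motive (tvar a))
    (h2 : ∀ K ts, (∀ t ∈ ts, motive t) → motive (tcon K ts)) : ∀ t, motive t := by
  intro t
  have : ∀ n (t : Ty), sizeOf t ≤ n → motive t := by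
    intro n
    induction n with
    | zero => intro t ht; cases t <;> simp at ht
    | succ n ih =>
      intro t ht
      cases t with
      | tvar a => exact h1 a
      | tcon K ts =>
        refine h2 K ts fun e he => ih e ?_
        have := List.sizeOf_lt_of_mem he
        simp at ht; omega
  exact this (sizeOf t) t le_rfl
end Ty
namespace Ty
theorem subst_subst (θ η : ℕ → Ty) (τ : Ty) :
    subst θ (subst η τ) = subst (fun a => subst θ (η a)) τ := by
  induction τ using my_ind with
  | h1 a => rw [subst_tvar, subst_tvar]
  | h2 K ts ih =>
    rw [subst_tcon, subst_tcon, subst_tcon, List.map_map]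
    exact congrArg _ (List.map_congr_left fun t ht => ih t ht)

theorem subst_congr {θ η : ℕ → Ty} {τ : Ty} (h : ∀ a, OccursT a τ → θ a = η a) :
    subst θ τ = subst η τ := by
  induction τ using my_ind with
  | h1 a => rw [subst_tvar, subst_tvar]; exact h a .tvar
  | h2 K ts ih =>
    rw [subst_tcon, subst_tcon]
    exact congrArg _ (List.map_congr_left fun t ht =>
      ih t ht fun a ha => h a (.tcon ht ha))

theorem subst_eq_occurs {θ η : ℕ → Ty} {τ : Ty} (h : subst θ τ = subst η τ) :
    ∀ a, OccursT a τ → θ a = η a := by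
  intro a ha
  induction ha with
  | tvar => rwa [subst_tvar, subst_tvar] at h
  | @tcon K τs τ hmem hocc ih =>
    rw [subst_tcon, subst_tcon, tcon.injEq] at h
    exact ih (List.map_inj_left.mp h.2 τ hmem)
end Ty
-- generic zip helper
theorem forall_zip_iff {α β : Type} {xs : List α} {ys : List β} (h : xs.length = ys.length)
    {Q : α → β → Prop} :
    (∀ p ∈ xs.zip ys, Q p.1 p.2) ↔ ∀ i : ℕ, (hi : i < xs.length) → Q xs[i] (ys[i]'(h ▸ hi)) := by
  constructor
  · intro H i hi
    exact H (xs[i], ys[i]'(h ▸ hi)) (by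
      rw [List.mem_iff_getElem]
      exact ⟨i, by simp [List.length_zip]; omega, by simp [List.getElem_zip]⟩)
  · intro H p hp
    rw [List.mem_iff_getElem] at hp
    obtain ⟨i, hi, rfl⟩ := hp
    simp only [List.getElem_zip]
    exact H i (by simp [List.length_zip] at hi; omega)

namespace Expr

theorem my_ind (motive : Expr → Prop) (h1 : ∀ x, motive (var x)) (h2 : motive bot)
    (h3 : ∀ c es, (∀ e ∈ es, motive e) → motive (con c es))
    (h4 : ∀ f es, (∀ e ∈ es, motive e) → motive (fn f es)) : ∀ e, motive e := by
  intro e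
  have : ∀ n (e : Expr), sizeOf e ≤ n → motive e := by
    intro n
    induction n with
    | zero => intro e he; cases e <;> simp at he
    | succ n ih =>
      intro e he
      cases e with
      | var x => exact h1 x
      | bot => exact h2
      | con c es =>
        refine h3 c es fun e hmem => ih e ?_
        have := List.sizeOf_lt_of_mem hmem; simp at he; omega
      | fn f es =>
        refine h4 f es fun e hmem => ih e ?_
        have := List.sizeOf_lt_of_mem hmem; simp at he; omega
  exact this (sizeOf e) e le_rfl

theorem subst_var (σ : ℕ → Expr) (x : ℕ) : subst σ (var x) = σ x := by rw [subst]
theorem subst_bot (σ : ℕ → Expr) : subst σ bot = bot := by rw [subst]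
theorem subst_con (σ : ℕ → Expr) (c : ℕ) (es : List Expr) :
    subst σ (con c es) = con c (es.map (subst σ)) := by
  rw [subst]; simp [List.attach_map_val]
theorem subst_fn (σ : ℕ → Expr) (f : ℕ) (es : List Expr) :
    subst σ (fn f es) = fn f (es.map (subst σ)) := by
  rw [subst]; simp [List.attach_map_val]

theorem isTerm_subst {σ : ℕ → Expr} (hσ : TermSub σ) {t : Expr} (ht : t.IsTerm) :
    (t.subst σ).IsTerm := by
  induction ht with
  | var x => rw [subst_var]; exact hσ x
  | bot => rw [subst_bot]; exact .bot
  | con h ih =>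
    rw [subst_con]
    exact .con fun e he => by
      obtain ⟨e', he', rfl⟩ := List.mem_map.mp he
      exact ih e' he'

theorem varCount_var (x y : ℕ) : varCount x (var y) = if y = x then 1 else 0 := by rw [varCount]
theorem varCount_bot (x : ℕ) : varCount x bot = 0 := by rw [varCount]
theorem varCount_con (x c : ℕ) (es : List Expr) :
    varCount x (con c es) = (es.map (varCount x)).sum := by
  rw [varCount]; simp [List.attach_map_val]
theorem varCount_fn (x f : ℕ) (es : List Expr) :
    varCount x (fn f es) = (es.map (varCount x)).sum := by
  rw [varCount]; simp [List.attach_map_val]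

theorem occurs_of_varCount_pos {x : ℕ} {e : Expr} (h : 1 ≤ varCount x e) : Occurs x e := by
  induction e using my_ind with
  | h1 y =>
    rw [varCount_var] at h
    split at h
    · subst ‹y = x›; exact .var
    · omega
  | h2 => rw [varCount_bot] at h; omega
  | h3 c es ih =>
    rw [varCount_con] at h
    have : ∃ e ∈ es, 1 ≤ varCount x e := by
      by_contra hc
      push_neg at hc
      have : (es.map (varCount x)).sum = 0 := by
        apply List.sum_eq_zero
        intro n hn
        obtain ⟨e', he', rfl⟩ := List.mem_map.mp hn
        have := hc e' he'; omega
      omega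
    obtain ⟨e', he', hce⟩ := this
    exact .con he' (ih e' he' hce)
  | h4 f es ih =>
    rw [varCount_fn] at h
    have : ∃ e ∈ es, 1 ≤ varCount x e := by
      by_contra hc
      push_neg at hc
      have : (es.map (varCount x)).sum = 0 := by
        apply List.sum_eq_zero
        intro n hn
        obtain ⟨e', he', rfl⟩ := List.mem_map.mp hn
        have := hc e' he'; omega
      omega
    obtain ⟨e', he', hce⟩ := this
    exact .fn he' (ih e' he' hce)

/-- Occurrence of ⊥. -/
inductive HasBot : Expr → Prop where
  | bot : HasBot bot
  | con {c : ℕ} {es : List Expr} {e : Expr} : e ∈ es → HasBot e → HasBot (con c es)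
  | fn {f : ℕ} {es : List Expr} {e : Expr} : e ∈ es → HasBot e → HasBot (fn f es)

theorem noBot_of_not_hasBot {e : Expr} (h : ¬ HasBot e) : NoBot e := by
  induction e using my_ind with
  | h1 x => exact .var x
  | h2 => exact absurd .bot h
  | h3 c es ih => exact .con fun e he => ih e he fun hb => h (.con he hb)
  | h4 f es ih => exact .fn fun e he => ih e he fun hb => h (.fn he hb)

theorem not_hasBot_of_noBot {e : Expr} (h : NoBot e) : ¬ HasBot e := by
  intro hb
  induction hb with
  | bot => cases h
  | con hmem _ ih => cases h with | con h2 => exact ih (h2 _ hmem)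
  | fn hmem _ ih => cases h with | fn h2 => exact ih (h2 _ hmem)

theorem hasBot_subst_intro {σ : ℕ → Expr} {p : Expr} {x : ℕ}
    (hocc : Occurs x p) (hb : HasBot (σ x)) : HasBot (p.subst σ) := by
  induction hocc with
  | var => rwa [subst_var]
  | con hmem _ ih => rw [subst_con]; exact .con (List.mem_map_of_mem hmem) ih
  | fn hmem _ ih => rw [subst_fn]; exact .fn (List.mem_map_of_mem hmem) ih

theorem hasBot_subst_elim {σ : ℕ → Expr} {p : Expr}
    (hp : NoBot p) (hb : HasBot (p.subst σ)) : ∃ x, Occurs x p ∧ HasBot (σ x) := by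
  induction hp with
  | var x => rw [subst_var] at hb; exact ⟨x, .var, hb⟩
  | con h ih =>
    rw [subst_con] at hb
    cases hb with
    | con hmem hbe =>
      obtain ⟨e', he', rfl⟩ := List.mem_map.mp hmem
      obtain ⟨x, hx, hbx⟩ := ih e' he' hbe
      exact ⟨x, .con he' hx, hbx⟩
  | fn h ih =>
    rw [subst_fn] at hb
    cases hb with
    | fn hmem hbe =>
      obtain ⟨e', he', rfl⟩ := List.mem_map.mp hmem
      obtain ⟨x, hx, hbx⟩ := ih e' he' hbe
      exact ⟨x, .fn he' hx, hbx⟩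

theorem noBot_subst_elim {σ : ℕ → Expr} {p : Expr} {x : ℕ}
    (hp : NoBot (p.subst σ)) (hocc : Occurs x p) : NoBot (σ x) :=
  noBot_of_not_hasBot fun hb => not_hasBot_of_noBot hp (hasBot_subst_intro hocc hb)

/-- Fill all ⊥ with a fixed total term. -/
def fill : Expr → Expr
  | var x => var x
  | bot => con 0 []
  | con c es => con c (es.attach.map fun e => fill e.1)
  | fn f es => fn f (es.attach.map fun e => fill e.1)
termination_by e => sizeOf e
decreasing_by
  all_goals (simp only [Expr.con.sizeOf_spec, Expr.fn.sizeOf_spec]; have := List.sizeOf_lt_of_mem e.2; omega)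

theorem fill_var (x : ℕ) : fill (var x) = var x := by rw [fill]
theorem fill_bot : fill bot = con 0 [] := by rw [fill]
theorem fill_con (c : ℕ) (es : List Expr) : fill (con c es) = con c (es.map fill) := by
  rw [fill]; simp [List.attach_map_val]
theorem fill_fn (f : ℕ) (es : List Expr) : fill (fn f es) = fn f (es.map fill) := by
  rw [fill]; simp [List.attach_map_val]

theorem noBot_fill (e : Expr) : NoBot (fill e) := by
  induction e using my_ind with
  | h1 x => rw [fill_var]; exact .var x
  | h2 => rw [fill_bot]; exact .con (by simp)
  | h3 c es ih =>
    rw [fill_con]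
    exact .con fun e he => by
      obtain ⟨e', he', rfl⟩ := List.mem_map.mp he; exact ih e' he'
  | h4 f es ih =>
    rw [fill_fn]
    exact .fn fun e he => by
      obtain ⟨e', he', rfl⟩ := List.mem_map.mp he; exact ih e' he'

theorem isTerm_fill {e : Expr} (h : e.IsTerm) : (fill e).IsTerm := by
  induction h with
  | var x => rw [fill_var]; exact .var x
  | bot => rw [fill_bot]; exact .con (by simp)
  | con h ih =>
    rw [fill_con]
    exact .con fun e he => by
      obtain ⟨e', he', rfl⟩ := List.mem_map.mp he; exact ih e' he'

theorem occurs_fill {x : ℕ} {e : Expr} (h : Occurs x (fill e)) : Occurs x e := by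
  induction e using my_ind with
  | h1 y => rwa [fill_var] at h
  | h2 => rw [fill_bot] at h; cases h with | con hmem _ => simp at hmem
  | h3 c es ih =>
    rw [fill_con] at h
    cases h with
    | con hmem he =>
      obtain ⟨e', he', rfl⟩ := List.mem_map.mp hmem
      exact .con he' (ih e' he' he)
  | h4 f es ih =>
    rw [fill_fn] at h
    cases h with
    | fn hmem he =>
      obtain ⟨e', he', rfl⟩ := List.mem_map.mp hmem
      exact .fn he' (ih e' he' he)

end Expr
section GeqLemmas
variable {P : Program}

theorem mem_zip_getElem {α β : Type} {xs : List α} {ys : List β} (h : xs.length = ys.length)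
    {i : ℕ} (hi : i < xs.length) : (xs[i], ys[i]'(h ▸ hi)) ∈ xs.zip ys := by
  rw [List.mem_iff_getElem]
  exact ⟨i, by simp [List.length_zip]; omega, by simp [List.getElem_zip]⟩

theorem cinst_shape (hsr : StronglyRegular P.C) {s t : Expr}
    (h : (s, t) ∈ CInstances P.C) :
    (∃ c l, s = Expr.con c l) ∧ (∃ d m, t = Expr.con d m) ∧ s.IsTerm ∧ t.IsTerm := by
  obtain ⟨p, hpC, σ, hσ, hor⟩ := h
  have hw := P.wfC.2 p hpC
  have shape : ∀ u : Expr, u.IsTotalTerm → (∀ x, u ≠ Expr.var x) → ∃ c l, u = Expr.con c l := by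
    intro u hu hnv
    cases hu.1 with
    | var x => exact absurd rfl (hnv x)
    | bot => cases hu.2
    | con h => exact ⟨_, _, rfl⟩
  have hnc := hsr.2 p hpC
  obtain ⟨c1, l1, he1⟩ := shape p.1 hw.1 hnc.1
  obtain ⟨c2, l2, he2⟩ := shape p.2 hw.2 hnc.2
  rcases hor with ⟨-, hq⟩ | ⟨-, hq⟩ <;>
    (injection hq with hq1 hq2; subst hq1; subst hq2) <;>
    refine ⟨?_, ?_, Expr.isTerm_subst hσ ?_, Expr.isTerm_subst hσ ?_⟩ <;>
    first
      | (rw [he1, Expr.subst_con]; exact ⟨_, _, rfl⟩)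
      | (rw [he2, Expr.subst_con]; exact ⟨_, _, rfl⟩)
      | exact hw.1.1
      | exact hw.2.1

theorem geq_hasBot (hsr : StronglyRegular P.C) {s t : Expr}
    (h : Geq P.C s t) (hb : Expr.HasBot s) : Expr.HasBot t := by
  induction h with
  | bot _ => exact .bot
  | refl _ => exact hb
  | trans _ _ ih1 ih2 => exact ih2 (ih1 hb)
  | @mono c ts ss hlen hall ih =>
    cases hb with
    | con hmem hbe =>
      rename_i e
      obtain ⟨i, hi, rfl⟩ := List.mem_iff_getElem.mp hmem
      have hp : (ts[i], ss[i]'(hlen ▸ hi)) ∈ ts.zip ss := mem_zip_getElem hlen hi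
      exact .con (List.getElem_mem _) (ih _ hp hbe)
  | @ax s t h =>
    obtain ⟨p, hpC, σ, hσ, hor⟩ := h
    have hw := P.wfC.2 p hpC
    have hreg := hsr.1 p hpC
    rcases hor with ⟨-, hq⟩ | ⟨-, hq⟩ <;> (injection hq with hq1 hq2; subst hq1; subst hq2)
    · obtain ⟨x, hx, hbx⟩ := Expr.hasBot_subst_elim hw.1.2 hb
      exact Expr.hasBot_subst_intro ((hreg x).mp hx) hbx
    · obtain ⟨x, hx, hbx⟩ := Expr.hasBot_subst_elim hw.2.2 hb
      exact Expr.hasBot_subst_intro ((hreg x).mpr hx) hbx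

theorem geq_rev (hsr : StronglyRegular P.C) {s t : Expr}
    (h : Geq P.C s t) (hnb : t.NoBot) : Geq P.C t s := by
  induction h with
  | bot _ => cases hnb
  | refl h => exact .refl h
  | trans h1 h2 ih1 ih2 =>
    have hnb' : Expr.NoBot _ := Expr.noBot_of_not_hasBot
      (fun hb => Expr.not_hasBot_of_noBot hnb (geq_hasBot hsr h2 hb))
    exact .trans (ih2 hnb) (ih1 hnb')
  | @mono c ts ss hlen hall ih =>
    refine .mono hlen.symm ?_
    rw [forall_zip_iff hlen.symm]
    intro i hi
    have hmem := mem_zip_getElem hlen (show i < ts.length by omega)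
    have hnbi : Expr.NoBot (ss[i]) := by
      cases hnb with | con h2 => exact h2 _ (List.getElem_mem _)
    exact ih _ hmem hnbi
  | @ax s t h =>
    obtain ⟨p, hpC, σ, hσ, hor⟩ := h
    rcases hor with ⟨hsafe, hq⟩ | ⟨hsafe, hq⟩ <;> (injection hq with hq1 hq2; subst hq1; subst hq2)
    · refine .ax ⟨p, hpC, σ, hσ, .inr ⟨?_, rfl⟩⟩
      intro x hx
      refine ⟨hσ x, Expr.noBot_subst_elim hnb (Expr.occurs_of_varCount_pos (by omega))⟩
    · refine .ax ⟨p, hpC, σ, hσ, .inl ⟨?_, rfl⟩⟩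
      intro x hx
      refine ⟨hσ x, Expr.noBot_subst_elim hnb (Expr.occurs_of_varCount_pos (by omega))⟩

theorem geq_fill {C : Axioms} {t : Expr} (ht : t.IsTerm) : Geq C (Expr.fill t) t := by
  induction ht with
  | var x => rw [Expr.fill_var]; exact .refl (.var x)
  | bot => rw [Expr.fill_bot]; exact .bot (.con (by simp))
  | @con c es h ih =>
    rw [Expr.fill_con]
    refine .mono (by simp) ?_
    rw [forall_zip_iff (by simp)]
    intro i hi
    simp only [List.getElem_map]
    exact ih _ (List.getElem_mem _)

end GeqLemmas
theorem zip_forall_intro {α β : Type} {xs : List α} {ys : List β} (h : xs.length = ys.length)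
    (Q : α → β → Prop) (H : ∀ i (hi : i < xs.length), Q xs[i] (ys[i]'(h ▸ hi))) :
    ∀ p ∈ xs.zip ys, Q p.1 p.2 := (forall_zip_iff h).mpr H

theorem zip_forall_elim {α β : Type} {xs : List α} {ys : List β} (h : xs.length = ys.length)
    (Q : α → β → Prop) (H : ∀ p ∈ xs.zip ys, Q p.1 p.2) (i : ℕ) (hi : i < xs.length) :
    Q xs[i] (ys[i]'(h ▸ hi)) := (forall_zip_iff h).mp H i hi

section GorcLemmas
variable {P : Program}

theorem gorc_refl {t : Expr} (ht : t.IsTerm) : GORC P (Stm.red t t) := by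
  induction ht with
  | var x => exact .rrefl x
  | bot => exact .bot _
  | @con c es h ih =>
    refine .dc rfl ?_
    refine zip_forall_intro (rfl : es.length = es.length) (fun a b => GORC P (Stm.red a b)) ?_
    intro i hi
    exact ih _ (List.getElem_mem _)

/-- target lowering, mono case -/
theorem gorc_down_mono {c : ℕ} {as bs : List Expr} (hlen : as.length = bs.length)
    (H : ∀ i (hi : i < as.length), ∀ e, GORC P (Stm.red e as[i]) →
      GORC P (Stm.red e (bs[i]'(hlen ▸ hi))))
    {st : Stm} (hg : GORC P st) :
    ∀ e, st = Stm.red e (Expr.con c as) → GORC P (Stm.red e (Expr.con c bs)) := by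
  induction hg with
  | bot e => rintro e' ⟨⟩
  | rrefl x => rintro e' ⟨⟩
  | @dc c' es ts hl hall ih =>
    rintro e' h
    injection h with h1 h2
    injection h2 with hc hts
    subst hc; subst hts; subst h1
    refine .dc (show es.length = bs.length by omega) ?_
    refine zip_forall_intro (show es.length = bs.length by omega) (fun a b => GORC P (Stm.red a b)) ?_
    intro i hi
    have := zip_forall_elim hl (fun a b => GORC P (Stm.red a b)) hall i hi
    exact H i (by omega) _ this
  | omut hne hci hl hall hred ih1 ih2 =>
    rintro e' h
    injection h with h1 h2
    subst h2; subst h1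
    exact .omut (by intro hc; cases hc) hci hl hall (ih2 _ rfl)
  | orule hne hri hl hall hcond hred iha ihc ihr =>
    rintro e' h
    injection h with h1 h2
    subst h2; subst h1
    exact .orule (by intro hc; cases hc) hri hl hall hcond (ihr _ rfl)
  | join _ _ _ => rintro e' ⟨⟩

/-- target lowering, ax case -/
theorem gorc_down_ax (hsr : StronglyRegular P.C) {t t' : Expr}
    (hci : (t, t') ∈ CInstances P.C) {st : Stm} (hg : GORC P st) :
    ∀ e, st = Stm.red e t → GORC P (Stm.red e t') := by
  obtain ⟨⟨c0, l0, hsh⟩, ⟨d0, m0, hsh'⟩, -, ht'term⟩ := cinst_shape hsr hci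
  have hne' : t' ≠ Expr.bot := by rw [hsh']; intro hc; cases hc
  induction hg with
  | bot e => rintro e' h; injection h with h1 h2; rw [hsh] at h2; cases h2
  | rrefl x => rintro e' h; injection h with h1 h2; rw [hsh] at h2; subst h1; cases h2
  | @dc c' es ts hl hall ih =>
    rintro e' h
    injection h with h1 h2
    subst h1
    subst h2
    exact .omut hne' hci hl hall (gorc_refl ht'term)
  | omut hne hci2 hl hall hred ih1 ih2 =>
    rintro e' h
    injection h with h1 h2
    subst h2; subst h1
    exact .omut hne' hci2 hl hall (ih2 _ rfl)
  | orule hne hri hl hall hcond hred iha ihc ihr =>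
    rintro e' h
    injection h with h1 h2
    subst h2; subst h1
    exact .orule hne' hri hl hall hcond (ihr _ rfl)
  | join _ _ _ => rintro e' ⟨⟩

/-- Cone property: targets can be lowered along `⊒_C`. -/
theorem gorc_down (hsr : StronglyRegular P.C) {t t' : Expr} (h : Geq P.C t t') :
    ∀ e, GORC P (Stm.red e t) → GORC P (Stm.red e t') := by
  induction h with
  | bot _ => exact fun e _ => .bot e
  | refl _ => exact fun e hg => hg
  | trans _ _ ih1 ih2 => exact fun e hg => ih2 e (ih1 e hg)
  | @mono c ts ss hlen hall ih =>
    intro e hg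
    refine gorc_down_mono hlen ?_ hg e rfl
    intro i hi e' hge'
    exact ih _ (mem_zip_getElem hlen hi) e' hge'
  | ax h => exact fun e hg => gorc_down_ax hsr h hg e rfl

/-- source raising, mono case -/
theorem gorc_up_mono {c : ℕ} {as bs : List Expr} (hlen : as.length = bs.length)
    (H : ∀ i (hi : i < as.length), ∀ u, GORC P (Stm.red (bs[i]'(hlen ▸ hi)) u) →
      GORC P (Stm.red as[i] u))
    {st : Stm} (hg : GORC P st) :
    ∀ u, st = Stm.red (Expr.con c bs) u → GORC P (Stm.red (Expr.con c as) u) := by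
  induction hg with
  | bot e => rintro u h; injection h with h1 h2; subst h2; exact .bot _
  | rrefl x => rintro u h; injection h with h1 h2; cases h1
  | @dc c' es ts hl hall ih =>
    rintro u h
    injection h with h1 h2
    injection h1 with hc hes
    subst hc; subst hes; subst h2
    refine .dc (show as.length = ts.length by omega) ?_
    refine zip_forall_intro (show as.length = ts.length by omega) (fun a b => GORC P (Stm.red a b)) ?_
    intro i hi
    have := zip_forall_elim hl (fun a b => GORC P (Stm.red a b)) hall i (by omega)
    exact H i hi _ this
  | @omut c2 es2 ts2 s2 t2 hne hci hl hall hred ih1 ih2 =>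
    rintro u h
    injection h with h1 h2
    injection h1 with hc hes
    subst hc; subst hes; subst h2
    refine .omut hne hci (show as.length = ts2.length by omega) ?_ hred
    refine zip_forall_intro (show as.length = ts2.length by omega) (fun a b => GORC P (Stm.red a b)) ?_
    intro i hi
    have := zip_forall_elim hl (fun a b => GORC P (Stm.red a b)) hall i (by omega)
    exact H i hi _ this
  | orule hne hri hl hall hcond hred iha ihc ihr => rintro u h; injection h with h1 h2; cases h1
  | join _ _ _ => rintro u ⟨⟩

/-- Monotonicity: sources can be raised along `⊒_C`. -/
theorem gorc_up (hsr : StronglyRegular P.C) {s' s : Expr} (h : Geq P.C s' s) :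
    ∀ u, GORC P (Stm.red s u) → GORC P (Stm.red s' u) := by
  induction h with
  | bot ht =>
    intro u hg
    have hu : u = Expr.bot := by cases hg; rfl
    subst hu; exact .bot _
  | refl _ => exact fun u hg => hg
  | trans _ _ ih1 ih2 => exact fun u hg => ih1 u (ih2 u hg)
  | @mono c ts ss hlen hall ih =>
    intro u hg
    refine gorc_up_mono hlen ?_ hg u rfl
    intro i hi u' hgu'
    exact ih _ (mem_zip_getElem hlen hi) u' hgu'
  | @ax a b hci =>
    intro u hg
    obtain ⟨⟨c0, l0, hsh⟩, -, haterm, -⟩ := cinst_shape hsr hci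
    by_cases hu : u = Expr.bot
    · subst hu; exact .bot _
    · subst hsh
      refine .omut hu hci rfl ?_ hg
      refine zip_forall_intro (rfl : l0.length = l0.length) (fun a b => GORC P (Stm.red a b)) ?_
      intro i hi
      refine gorc_refl ?_
      cases haterm with | con h => exact h _ (List.getElem_mem _)

end GorcLemmas
section Typing
variable {Sg : Signature}

theorem hasType_con_inv {V : Env} {c : ℕ} {es : List Expr} {τ : Ty}
    (h : HasType Sg V (Expr.con c es) τ) :
    ∃ D σt, Sg.dc c = some D ∧ es.length = D.args.length ∧ τ = Ty.subst σt D.res ∧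
      ∀ p ∈ es.zip D.args, HasType Sg V p.1 (Ty.subst σt p.2) := by
  cases h with | con hdc hlen hall => exact ⟨_, _, hdc, hlen, rfl, hall⟩

theorem hasType_fn_inv {V : Env} {f : ℕ} {es : List Expr} {τ : Ty}
    (h : HasType Sg V (Expr.fn f es) τ) :
    ∃ D σt, Sg.fs f = some D ∧ es.length = D.args.length ∧ τ = Ty.subst σt D.res ∧
      ∀ p ∈ es.zip D.args, HasType Sg V p.1 (Ty.subst σt p.2) := by
  cases h with | fn hfs hlen hall => exact ⟨_, _, hfs, hlen, rfl, hall⟩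

theorem hasType_var_inv {V : Env} {x : ℕ} {τ : Ty} (h : HasType Sg V (Expr.var x) τ) :
    V x = some τ := by
  cases h with | var h => exact h

/-- transparency transfer of argument types -/
theorem args_subst_eq {D : Decl} (htr : D.Transparent) {σt σt' : ℕ → Ty}
    (hres : Ty.subst σt D.res = Ty.subst σt' D.res) {τa : Ty} (hmem : τa ∈ D.args) :
    Ty.subst σt τa = Ty.subst σt' τa :=
  Ty.subst_congr fun a ha => Ty.subst_eq_occurs hres a (htr a ⟨τa, hmem, ha⟩)

/-- L3: types of substituted variables, extracted by comparing a typing of a data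
term `t` in `V₀` with a typing of `t.subst σ` in `V`. -/
theorem occ_typing {V V₀ : Env} {σ : ℕ → Expr} {θ : ℕ → Ty} :
    ∀ {t : Expr}, t.IsTerm → ∀ {τ₀ : Ty}, HasType Sg V₀ t τ₀ →
      HasType Sg V (t.subst σ) (Ty.subst θ τ₀) →
      ∀ x, Expr.Occurs x t → ∀ τx, V₀ x = some τx → HasType Sg V (σ x) (Ty.subst θ τx) := by
  intro t ht
  induction ht with
  | var y =>
    intro τ₀ h0 hs x hx τx hVx
    have h0' := hasType_var_inv h0
    cases hx
    rw [h0'] at hVx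
    injection hVx with hVx
    subst hVx
    rwa [Expr.subst_var] at hs
  | bot => intro τ₀ h0 hs x hx; cases hx
  | @con c us hterm ih =>
    intro τ₀ h0 hs x hx τx hVx
    obtain ⟨D, η, hdc, hlen0, hτ0, hall0⟩ := hasType_con_inv h0
    rw [Expr.subst_con] at hs
    obtain ⟨D', η', hdc', hlen', hτ', hall'⟩ := hasType_con_inv hs
    rw [hdc] at hdc'
    injection hdc' with hDD
    subst hDD
    have htr := Sg.dc_trans c D hdc
    have hres : Ty.subst η' D.res = Ty.subst (fun a => Ty.subst θ (η a)) D.res := by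
      rw [← Ty.subst_subst, ← hτ', hτ0]
    cases hx with
    | con hmem hocc =>
      rename_i e'
      obtain ⟨i, hi, rfl⟩ := List.mem_iff_getElem.mp hmem
      have h0i := zip_forall_elim hlen0 (fun a b => HasType Sg V₀ a (Ty.subst η b)) hall0 i hi
      have hsi := zip_forall_elim hlen' (fun a b => HasType Sg V a (Ty.subst η' b)) hall' i
        (by simp; omega)
      simp only [List.getElem_map] at hsi
      have hargmem : (D.args[i]'(hlen0 ▸ hi)) ∈ D.args := List.getElem_mem _
      have := args_subst_eq htr hres hargmem
      rw [this, ← Ty.subst_subst] at hsi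
      exact ih _ hmem h0i hsi x hocc τx hVx

/-- L4: typing of substituted expressions. -/
theorem subst_typing {V V₀ : Env} {σ : ℕ → Expr} {θ : ℕ → Ty} :
    ∀ {b : Expr} {τ₀ : Ty}, HasType Sg V₀ b τ₀ →
      (∀ x τx, Expr.Occurs x b → V₀ x = some τx → HasType Sg V (σ x) (Ty.subst θ τx)) →
      HasType Sg V (b.subst σ) (Ty.subst θ τ₀) := by
  intro b τ₀ h0
  induction h0 with
  | @var x τ hVx =>
    intro hyp
    rw [Expr.subst_var]
    exact hyp x τ .var hVx
  | bot τ => intro _; rw [Expr.subst_bot]; exact .bot _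
  | @con c es D η hdc hlen hall ih =>
    intro hyp
    rw [Expr.subst_con, Ty.subst_subst]
    refine HasType.con hdc (by simpa using hlen) ?_
    refine zip_forall_intro (by simpa using hlen)
      (fun a b => HasType Sg V a (Ty.subst (fun a => Ty.subst θ (η a)) b)) ?_
    intro i hi
    simp only [List.getElem_map]
    rw [← Ty.subst_subst]
    have hilt : i < es.length := by simpa using hi
    have hmem := mem_zip_getElem hlen hilt
    refine ih _ hmem ?_
    intro x τx hx hVx
    exact hyp x τx (.con (List.getElem_mem _) hx) hVx
  | @fn f es D η hfs hlen hall ih =>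
    intro hyp
    rw [Expr.subst_fn, Ty.subst_subst]
    refine HasType.fn hfs (by simpa using hlen) ?_
    refine zip_forall_intro (by simpa using hlen)
      (fun a b => HasType Sg V a (Ty.subst (fun a => Ty.subst θ (η a)) b)) ?_
    intro i hi
    simp only [List.getElem_map]
    rw [← Ty.subst_subst]
    have hilt : i < es.length := by simpa using hi
    have hmem := mem_zip_getElem hlen hilt
    refine ih _ hmem ?_
    intro x τx hx hVx
    exact hyp x τx (.fn (List.getElem_mem _) hx) hVx

/-- one direction of type preservation for axiom instances -/
theorem axiom_pres_one {V V₀ : Env} {a b : Expr} {σ : ℕ → Expr}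
    {c : ℕ} {ts : List Expr} {D : Decl} {ρ : ℕ → ℕ} {τs : List Ty} {th τ : Ty}
    (ha : a = Expr.con c ts) (haT : a.IsTerm)
    (hdc : Sg.dc c = some D) (hinj : Function.Injective ρ)
    (hvar : (⟨τs, th⟩ : Decl) = D.substT (fun α => Ty.tvar (ρ α)))
    (hT1 : HasType Sg V₀ a th) (hT2 : HasType Sg V₀ b th)
    (hocc : ∀ x, Expr.Occurs x b → Expr.Occurs x a)
    (h : HasType Sg V (a.subst σ) τ) :
    HasType Sg V (b.subst σ) τ := by
  subst ha
  have h' := h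
  rw [Expr.subst_con] at h'
  obtain ⟨D', σt, hdc', hlen, hτeq, hcomp⟩ := hasType_con_inv h'
  rw [hdc] at hdc'
  injection hdc' with hDD
  subst hDD
  have hres : th = Ty.subst (fun α => Ty.tvar (ρ α)) D.res := congrArg Decl.res hvar
  classical
  set θ : ℕ → Ty := fun b => if hb : ∃ a, ρ a = b then σt hb.choose else Ty.tvar b with hθ
  have hθρ : ∀ a, θ (ρ a) = σt a := by
    intro a
    have hex : ∃ a', ρ a' = ρ a := ⟨a, rfl⟩
    rw [hθ]
    simp only [dif_pos hex]
    have := hex.choose_spec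
    rw [hinj this]
  have hτθ : Ty.subst θ th = τ := by
    rw [hres, Ty.subst_subst, hτeq]
    have : (fun a => Ty.subst θ (Ty.tvar (ρ a))) = σt := funext fun a => by
      rw [Ty.subst_tvar, hθρ]
    rw [this]
  have hkey := occ_typing haT hT1 (show HasType Sg V ((Expr.con c ts).subst σ) (Ty.subst θ th) by
    rw [hτθ]; exact h)
  have := subst_typing hT2 (fun x τx hx hVx => hkey x (hocc x hx) τx hVx)
  rwa [hτθ] at this

theorem axiom_pres {P : Program} (hsr : StronglyRegular P.C)
    (hwt : ∀ p ∈ P.C, WellTypedAxiom Sg p) {V : Env} {s t : Expr}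
    (hci : (s, t) ∈ CInstances P.C) {τ : Ty} (h : HasType Sg V s τ) :
    HasType Sg V t τ := by
  obtain ⟨p, hpC, σ, hσ, hor⟩ := hci
  obtain ⟨c, ts, d, ss, τs, τs', th, h1, h2, ⟨Dc, hdcc, ρc, hinjc, hvarc⟩,
    ⟨Dd, hdcd, ρd, hinjd, hvard⟩, V₀, hT1, hT2⟩ := hwt p hpC
  have hw := P.wfC.2 p hpC
  have hreg := hsr.1 p hpC
  rcases hor with ⟨-, hq⟩ | ⟨-, hq⟩ <;> (injection hq with hq1 hq2; subst hq1; subst hq2)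
  · exact axiom_pres_one h1 hw.1.1 hdcc hinjc hvarc hT1 hT2
      (fun x hx => (hreg x).mpr hx) h
  · exact axiom_pres_one h2 hw.2.1 hdcd hinjd hvard hT2 hT1
      (fun x hx => (hreg x).mp hx) h

/-- Type preservation along `⊒_C`. -/
theorem geq_pres {P : Program} (hsr : StronglyRegular P.C)
    (hwt : ∀ p ∈ P.C, WellTypedAxiom Sg p) {V : Env} {s t : Expr}
    (h : Geq P.C s t) : ∀ τ, HasType Sg V s τ → HasType Sg V t τ := by
  induction h with
  | bot _ => exact fun τ _ => .bot τ
  | refl _ => exact fun τ h => h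
  | trans _ _ ih1 ih2 => exact fun τ h => ih2 τ (ih1 τ h)
  | @mono c ts ss hlen hall ih =>
    intro τ h
    obtain ⟨D, η, hdc, hlen0, hτ0, hall0⟩ := hasType_con_inv h
    subst hτ0
    refine HasType.con hdc (by omega) ?_
    refine zip_forall_intro (show ss.length = D.args.length by omega)
      (fun a b => HasType Sg V a (Ty.subst η b)) ?_
    intro i hi
    have h1 := zip_forall_elim hlen0 (fun a b => HasType Sg V a (Ty.subst η b)) hall0 i (by omega)
    exact ih _ (mem_zip_getElem hlen (by omega)) _ h1
  | ax hci => exact fun τ h => axiom_pres hsr hwt hci h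

end Typing
section SR
variable {Sg : Signature}

theorem gorc_pres {P : Program} (hsr : StronglyRegular P.C)
    (hwt : ∀ p ∈ P.C, WellTypedAxiom Sg p)
    (hR : ∀ ρ ∈ P.R, RegularRule ρ ∧ WellTypedRule Sg ρ) {V : Env} {st : Stm}
    (hg : GORC P st) :
    ∀ e t, st = Stm.red e t → ∀ τ, HasType Sg V e τ → HasType Sg V t τ := by
  induction hg with
  | bot e => rintro e' t' heq; injection heq with h1 h2; subst h2; exact fun τ _ => .bot τ
  | rrefl x => rintro e' t' heq; injection heq with h1 h2; subst h1; subst h2; exact fun τ h => h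
  | @dc c es ts hl hall ih =>
    rintro e' t' heq
    injection heq with h1 h2
    subst h1; subst h2
    intro τ h
    obtain ⟨D, η, hdc, hlen0, hτ0, hall0⟩ := hasType_con_inv h
    subst hτ0
    refine HasType.con hdc (by omega) ?_
    refine zip_forall_intro (show ts.length = D.args.length by omega)
      (fun a b => HasType Sg V a (Ty.subst η b)) ?_
    intro i hi
    have h1 := zip_forall_elim hlen0 (fun a b => HasType Sg V a (Ty.subst η b)) hall0 i (by omega)
    exact ih _ (mem_zip_getElem hl (by omega)) _ _ rfl _ h1
  | @omut c es ts s0 t0 hne hci hl hall hred iha ihr =>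
    rintro e' t' heq
    injection heq with h1 h2
    subst h1; subst h2
    intro τ h
    obtain ⟨D, η, hdc, hlen0, hτ0, hall0⟩ := hasType_con_inv h
    subst hτ0
    have hts : HasType Sg V (Expr.con c ts) (Ty.subst η D.res) := by
      refine HasType.con hdc (by omega) ?_
      refine zip_forall_intro (show ts.length = D.args.length by omega)
        (fun a b => HasType Sg V a (Ty.subst η b)) ?_
      intro i hi
      have h1 := zip_forall_elim hlen0 (fun a b => HasType Sg V a (Ty.subst η b)) hall0 i (by omega)
      exact iha _ (mem_zip_getElem hl (by omega)) _ _ rfl _ h1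
    have hs := axiom_pres hsr hwt hci hts
    exact ihr _ _ rfl _ hs
  | @orule es ρ t hne hri hl hall hcond hred iha ihc ihr =>
    rintro e' t' heq
    injection heq with h1 h2
    subst h1; subst h2
    intro τ h
    obtain ⟨ρ₀, hρ₀R, σ, hσ, hρeq⟩ := hri
    subst hρeq
    simp only [Rule.subst] at h hl iha ⊢
    obtain ⟨hreg, D0, hfs0, hlenr, V₀, hlhsT, hrhsT, hcondT⟩ := hR ρ₀ hρ₀R
    obtain ⟨D, σt, hfs, hlen', hτeq, hesT⟩ := hasType_fn_inv h
    rw [hfs0] at hfs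
    injection hfs with hDD
    subst hDD
    subst hτeq
    have hwfρ := P.wfR ρ₀ hρ₀R
    have hkey : ∀ i (hi : i < ρ₀.lhs.length), ∀ x, Expr.Occurs x (ρ₀.lhs[i]) →
        ∀ τx, V₀ x = some τx → HasType Sg V (σ x) (Ty.subst σt τx) := by
      intro i hi
      have hiT0 := zip_forall_elim hlenr (fun a b => HasType Sg V₀ a b) hlhsT i hi
      have hilt : i < es.length := by simp at hl; omega
      have hesTi := zip_forall_elim hlen' (fun a b => HasType Sg V a (Ty.subst σt b)) hesT i hilt
      have hred_i := iha _ (mem_zip_getElem (by simpa using hl) hilt) _ _ rfl _ hesTi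
      simp only [List.getElem_map] at hred_i
      have hiterm : (ρ₀.lhs[i]).IsTerm := (hwfρ.2.1 _ (List.getElem_mem _)).1
      exact occ_typing hiterm hiT0 hred_i
    have hval : ∀ x τx, Expr.Occurs x ρ₀.rhs → V₀ x = some τx →
        HasType Sg V (σ x) (Ty.subst σt τx) := by
      intro x τx hx hVx
      obtain ⟨l, hlmem, hocc⟩ := hreg x hx
      obtain ⟨i, hi, rfl⟩ := List.mem_iff_getElem.mp hlmem
      exact hkey i hi x hocc τx hVx
    have hrhs := subst_typing hrhsT hval
    exact ihr _ _ rfl _ hrhs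
  | join _ _ _ => rintro e' t' ⟨⟩

end SR
/-- Theorem 5.5: for a program `P` whose set `C` of equational axioms is
strongly regular and well-typed, the term model `M_P(V)` is a PT-algebra,
i.e. all its components are well defined on `≈_C`-classes and satisfy the
PT-algebra requirements; moreover, if all rules of `P` are regular and
well-typed, then `M_P(V)` is a well-typed PT-algebra, i.e. its operations
respect the instances of the declared principal types. -/
theorem term_model_is_pt_algebra (Sg : Signature) (P : Program) (V : Env)
    (hsr : StronglyRegular P.C) (hwt : ∀ p ∈ P.C, WellTypedAxiom Sg p) :
    -- (1) the data universe Term_{Σ⊥}(X)/≈_C is a poset with bottom [⊥]: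
    ((∀ t, TermOver V t → Geq P.C t t) ∧
     (∀ t t' t'' : Expr, Geq P.C t t' → Geq P.C t' t'' → Geq P.C t t'') ∧
     (∀ t, TermOver V t → Geq P.C t Expr.bot) ∧
     -- (2) the type extensions are well defined on classes and are cones:
     (∀ (τ : Ty) (s t : Expr), TermOver V s → TermOver V t → EqC P.C s t →
        (HasType Sg V s τ ↔ HasType Sg V t τ)) ∧
     (∀ τ : Ty, HasType Sg V Expr.bot τ) ∧
     (∀ (τ : Ty) (s t : Expr), TermOver V s → TermOver V t →
        HasType Sg V s τ → Geq P.C s t → HasType Sg V t τ) ∧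
     -- (4) the constructor operations are well defined and monotonic …
     (∀ (c : ℕ) (ts ss : List Expr), ts.length = ss.length →
        (∀ p ∈ ts.zip ss, Geq P.C p.1 p.2) →
        Geq P.C (Expr.con c ts) (Expr.con c ss)) ∧
     -- … and preserve maximal (totally defined) elements:
     (∀ (c : ℕ) (ts : List Expr), (∀ t ∈ ts, TermOver V t ∧ MaxClass P V t) →
        MaxClass P V (Expr.con c ts)) ∧
     -- (5) the function operations are cone-valued, well defined, monotonic:
     (∀ (f : ℕ) (ts : List Expr), GORC P (Stm.red (Expr.fn f ts) Expr.bot)) ∧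
     (∀ (f : ℕ) (ts : List Expr) (t t' : Expr),
        GORC P (Stm.red (Expr.fn f ts) t) → Geq P.C t t' →
        GORC P (Stm.red (Expr.fn f ts) t')) ∧
     (∀ (f : ℕ) (ts ss : List Expr) (t : Expr), ts.length = ss.length →
        (∀ p ∈ ts.zip ss, Geq P.C p.2 p.1) →
        GORC P (Stm.red (Expr.fn f ts) t) → GORC P (Stm.red (Expr.fn f ss) t))) ∧
    -- if moreover all rules are regular and well-typed, M_P(V) is well-typed:
    ((∀ ρ ∈ P.R, RegularRule ρ ∧ WellTypedRule Sg ρ) →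
      (∀ (c : ℕ) (D : Decl) (σt : ℕ → Ty) (ts : List Expr),
         Sg.dc c = some D → ts.length = D.args.length →
         (∀ p ∈ ts.zip D.args, HasType Sg V p.1 (Ty.subst σt p.2)) →
         HasType Sg V (Expr.con c ts) (Ty.subst σt D.res)) ∧
      (∀ (f : ℕ) (D : Decl) (σt : ℕ → Ty) (ts : List Expr) (t : Expr),
         Sg.fs f = some D → ts.length = D.args.length →
         (∀ p ∈ ts.zip D.args, HasType Sg V p.1 (Ty.subst σt p.2)) →
         GORC P (Stm.red (Expr.fn f ts) t) →
         HasType Sg V t (Ty.subst σt D.res))) := by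
  refine ⟨⟨fun t ht => .refl ht.1,
    fun t t' t'' h1 h2 => Geq.trans h1 h2,
    fun t ht => .bot ht.1,
    fun τ s t _ _ heq => ⟨fun h => geq_pres hsr hwt heq.1 τ h,
      fun h => geq_pres hsr hwt heq.2 τ h⟩,
    fun τ => .bot τ,
    fun τ s t _ _ hT hG => geq_pres hsr hwt hG τ hT,
    fun c ts ss h1 h2 => .mono h1 h2,
    ?_,
    fun f ts => .bot _,
    fun f ts t t' hg hge => gorc_down hsr hge _ hg,
    ?_⟩,
    fun hR => ⟨fun c D σt ts hdc hlen hall => HasType.con hdc hlen hall,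
      fun f D σt ts t hfs hlen hall hg =>
        gorc_pres hsr hwt hR hg _ _ rfl _ (HasType.fn hfs hlen hall)⟩⟩
  · -- maximality of constructor classes
    intro c ts hts s hsO hgeq
    have h1 : Geq P.C (Expr.con c ts) (Expr.con c (ts.map Expr.fill)) := by
      refine .mono (by simp) ?_
      refine zip_forall_intro (show ts.length = (ts.map Expr.fill).length by simp)
        (fun a b => Geq P.C a b) ?_
      intro i hi
      simp only [List.getElem_map]
      have hm := hts _ (List.getElem_mem hi)
      exact hm.2 _ ⟨Expr.isTerm_fill hm.1.1, fun x hx => hm.1.2 x (Expr.occurs_fill hx)⟩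
        (geq_fill hm.1.1)
    have hnb : Expr.NoBot (Expr.con c (ts.map Expr.fill)) := by
      refine .con fun e he => ?_
      obtain ⟨e', -, rfl⟩ := List.mem_map.mp he
      exact Expr.noBot_fill e'
    exact Geq.trans h1 (geq_rev hsr (Geq.trans hgeq h1) hnb)
  · -- monotonicity of function denotations in their arguments
    intro f ts ss t hlen hall hg
    cases hg with
    | bot => exact .bot _
    | orule hne hri hl hall2 hcond hred =>
      refine .orule hne hri (by omega) ?_ hcond hred
      refine zip_forall_intro (show ss.length = _ by omega)
        (fun a b => GORC P (Stm.red a b)) ?_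
      intro i hi
      have h1 := zip_forall_elim hl (fun a b => GORC P (Stm.red a b)) hall2 i (by omega)
      have h2 := zip_forall_elim hlen (fun a b => Geq P.C b a) hall i (by omega)
      exact gorc_up hsr h2 _ h1

end ACRWL
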